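/- arXiv:2212.12921 — 2 statements merged into one kernel-verified Lean document; each statement's English description precedes it below -/
import Mathlib

section
/- Let λ > 0, t ∈ ℝⁿ, and let u* ∈ B_k minimize u ↦ Σ_{j=1}^m φ(√d_j·t_{s_j}, λd_j + u_j) over B_k = {u : 0 ≤ u ≤ 1, Σ_j u_j ≤ k}. Then the proximal point v = prox_{λ·GS_k}(t) is given groupwise by v_{s_j} = (u*_j / (λ d_j + u*_j)) · t_{s_j} for each j ∈ {1,…,m}. -/
open Finset

noncomputable section
open scoped Classical BigOperators

/-- Keep only the entries of `θ` in the index set `s`, zero out the rest. -/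
def groupProj {n : ℕ} (s : Finset (Fin n)) (θ : Fin n → ℝ) : Fin n → ℝ :=
  fun i => if i ∈ s then θ i else 0

/-- Number of groups of `θ` (w.r.t. the groups `s`) that are nonzero. -/
def nnzGroups {n m : ℕ} (s : Fin m → Finset (Fin n)) (θ : Fin n → ℝ) : ℕ :=
  (Finset.univ.filter fun j => groupProj (s j) θ ≠ 0).card

/-- The indicator-augmented weighted group sparse function `gs_k`. -/
def gsk {n m : ℕ} (s : Fin m → Finset (Fin n)) (d : Fin m → ℝ) (k : ℕ)
    (θ : Fin n → ℝ) : EReal :=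
  if nnzGroups s θ ≤ k then
    (((1 : ℝ) / 2) * ∑ j, d j * ∑ i ∈ s j, (θ i) ^ 2 : ℝ) else ⊤

/-- Fenchel conjugate of an extended-real-valued function on `ℝⁿ`. -/
def fconj {n : ℕ} (f : (Fin n → ℝ) → EReal) (y : Fin n → ℝ) : EReal :=
  ⨆ θ : Fin n → ℝ, ((∑ i, y i * θ i : ℝ) : EReal) - f θ

/-- Perspective of the squared Euclidean norm. -/
def phi {n : ℕ} (v : Fin n → ℝ) (t : ℝ) : EReal :=
  if 0 < t then ((∑ i, (v i) ^ 2) / t : ℝ)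
  else if v = 0 ∧ t = 0 then (0 : EReal) else ⊤

/-- `ℓ₀` "norm": number of nonzero coordinates. -/
def l0norm {n : ℕ} (t : Fin n → ℝ) : ℕ :=
  (Finset.univ.filter fun i => t i ≠ 0).card

/-- The (unstructured) sparse function `s_k`. -/
def sparseFun {m : ℕ} (k : ℕ) (x : Fin m → ℝ) : EReal :=
  if l0norm x ≤ k then (((1 : ℝ) / 2) * ∑ i, (x i) ^ 2 : ℝ) else ⊤

/-- The constraint set `B_k`. -/
def Bk (m k : ℕ) : Set (Fin m → ℝ) :=
  {u | (∀ j, 0 ≤ u j ∧ u j ≤ 1) ∧ (∑ j, u j) ≤ (k : ℝ)}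


private lemma ereal_coe_sum {α : Type*} (s : Finset α) (f : α → ℝ) :
    ((∑ x ∈ s, f x : ℝ) : EReal) = ∑ x ∈ s, ((f x : ℝ) : EReal) := by
  induction s using Finset.cons_induction with
  | empty => simp
  | cons a s ha ih => rw [Finset.sum_cons, Finset.sum_cons, EReal.coe_add, ih]

private lemma lp_top_k {m k : ℕ} (hk1 : 1 ≤ k) (q u : Fin m → ℝ) (hq : ∀ j, 0 ≤ q j)
    (hu0 : ∀ j, 0 ≤ u j) (hu1 : ∀ j, u j ≤ 1) (husum : ∑ j, u j ≤ (k : ℝ)) :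
    ∃ J : Finset (Fin m), J.card ≤ k ∧ ∑ j, u j * q j ≤ ∑ j ∈ J, q j := by
  obtain ⟨J, hJmem, hJmax⟩ := Finset.exists_max_image
    ((Finset.univ : Finset (Finset (Fin m))).filter fun J => J.card ≤ k)
    (fun J => ∑ j ∈ J, q j) ⟨∅, by simp⟩
  have hJk : J.card ≤ k := (Finset.mem_filter.mp hJmem).2
  refine ⟨J, hJk, ?_⟩
  have hmax : ∀ J' : Finset (Fin m), J'.card ≤ k → ∑ j ∈ J', q j ≤ ∑ j ∈ J, q j := fun J' h =>
    hJmax J' (Finset.mem_filter.mpr ⟨Finset.mem_univ _, h⟩)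
  have hsplit : ∑ j ∈ (Finset.univ : Finset (Fin m)) \ J, u j * q j + ∑ j ∈ J, u j * q j
      = ∑ j, u j * q j := Finset.sum_sdiff (Finset.subset_univ J)
  by_cases hB : ∃ j', j' ∉ J ∧ 0 < q j'
  · obtain ⟨j₀, hj₀J, hj₀q⟩ := hB
    have hcard : J.card = k := by
      by_contra hne
      have hlt : J.card < k := lt_of_le_of_ne hJk hne
      have h5 := hmax (insert j₀ J) (by rw [Finset.card_insert_of_notMem hj₀J]; omega)
      rw [Finset.sum_insert hj₀J] at h5
      linarith
    obtain ⟨j₁, hj₁J, hj₁min⟩ := Finset.exists_min_image J q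
      (by rw [← Finset.card_pos, hcard]; omega)
    have hμ0 : 0 ≤ q j₁ := hq j₁
    have hout : ∀ j', j' ∉ J → q j' ≤ q j₁ := by
      intro j' hj'
      have hne : j' ∉ J.erase j₁ := fun h => hj' (Finset.mem_of_mem_erase h)
      have hcard' : (insert j' (J.erase j₁)).card ≤ k := by
        rw [Finset.card_insert_of_notMem hne, Finset.card_erase_of_mem hj₁J, hcard]
        omega
      have h2 := hmax _ hcard'
      rw [Finset.sum_insert hne] at h2
      have h3 : q j₁ + ∑ j ∈ J.erase j₁, q j = ∑ j ∈ J, q j :=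
        Finset.add_sum_erase J q hj₁J
      linarith
    have h1 : ∑ j ∈ (Finset.univ : Finset (Fin m)) \ J, u j * q j
        ≤ ∑ j ∈ (Finset.univ : Finset (Fin m)) \ J, u j * q j₁ := by
      refine Finset.sum_le_sum fun j hj => ?_
      exact mul_le_mul_of_nonneg_left (hout j (Finset.mem_sdiff.mp hj).2) (hu0 j)
    have h1' : ∑ j ∈ (Finset.univ : Finset (Fin m)) \ J, u j * q j₁
        = (∑ j ∈ (Finset.univ : Finset (Fin m)) \ J, u j) * q j₁ := by
      rw [Finset.sum_mul]
    have h2 : ∑ j ∈ (Finset.univ : Finset (Fin m)) \ J, u j + ∑ j ∈ J, u j = ∑ j, u j :=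
      Finset.sum_sdiff (Finset.subset_univ J)
    have hkJ : (k : ℝ) = ∑ j ∈ J, (1 : ℝ) := by
      rw [Finset.sum_const, hcard, nsmul_eq_mul, mul_one]
    have h4 : ∑ j ∈ J, (u j * q j + (1 - u j) * q j₁) ≤ ∑ j ∈ J, q j := by
      refine Finset.sum_le_sum fun j hj => ?_
      have := hj₁min j hj
      have hu1j := hu1 j
      have hu0j := hu0 j
      have hq0j := hq j
      nlinarith
    have h6 : ∑ j ∈ J, (u j * q j + (1 - u j) * q j₁)
        = ∑ j ∈ J, u j * q j + (∑ j ∈ J, (1 - u j)) * q j₁ := by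
      rw [Finset.sum_add_distrib, Finset.sum_mul]
    have h7 : ∑ j ∈ J, (1 - u j) = ∑ j ∈ J, (1:ℝ) - ∑ j ∈ J, u j := by
      rw [Finset.sum_sub_distrib]
    have h8 : (∑ j ∈ (Finset.univ : Finset (Fin m)) \ J, u j) * q j₁
        ≤ (∑ j ∈ J, (1 - u j)) * q j₁ := by
      apply mul_le_mul_of_nonneg_right _ hμ0
      rw [h7]
      linarith
    linarith
  · push_neg at hB
    have hz : ∀ j', j' ∉ J → q j' = 0 := fun j' hj' => le_antisymm (hB j' hj') (hq j')
    have h1 : ∑ j ∈ (Finset.univ : Finset (Fin m)) \ J, u j * q j = 0 := by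
      refine Finset.sum_eq_zero fun j hj => ?_
      rw [hz j (Finset.mem_sdiff.mp hj).2, mul_zero]
    have h4 : ∑ j ∈ J, u j * q j ≤ ∑ j ∈ J, q j := by
      refine Finset.sum_le_sum fun j hj => ?_
      nlinarith [hu1 j, hu0 j, hq j]
    linarith

private lemma vi_lemma {m : ℕ} (k : ℕ) (d T ustar : Fin m → ℝ)
    (hd : ∀ j, 0 < d j) (hT : ∀ j, 0 ≤ T j) (lam : ℝ) (hlam : 0 < lam)
    (hmem : ustar ∈ Bk m k)
    (hust' : ∀ u ∈ Bk m k,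
      ∑ j, d j * T j / (lam * d j + ustar j) ≤ ∑ j, d j * T j / (lam * d j + u j))
    (u : Fin m → ℝ) (hu : u ∈ Bk m k) :
    ∑ j, (d j * T j / (lam * d j + ustar j) ^ 2) * u j
      ≤ ∑ j, (d j * T j / (lam * d j + ustar j) ^ 2) * ustar j := by
  set a : Fin m → ℝ := fun j => lam * d j + ustar j with hadef
  have hu0 : ∀ j, 0 ≤ ustar j := fun j => (hmem.1 j).1
  have hapos : ∀ j, 0 < a j := fun j =>
    add_pos_of_pos_of_nonneg (mul_pos hlam (hd j)) (hu0 j)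
  set δ : Fin m → ℝ := fun j => u j - ustar j with hδdef
  set C : ℝ := ∑ j, d j * T j * (δ j) ^ 2 / ((a j) ^ 2 * (lam * d j)) with hCdef
  have hC0 : 0 ≤ C := by
    refine Finset.sum_nonneg fun j _ => ?_
    have := hd j; have := hT j; have := hapos j
    positivity
  have key : ∀ ε : ℝ, 0 < ε → ε ≤ 1 → ∑ j, (d j * T j / (a j) ^ 2) * δ j ≤ ε * C := by
    intro ε hε0 hε1
    set uε : Fin m → ℝ := fun j => ustar j + ε * δ j with huεdef
    have huεpos : ∀ j, 0 ≤ uε j := by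
      intro j
      have h1 := (hmem.1 j).1
      have h2 := (hu.1 j).1
      simp only [huεdef, hδdef]
      nlinarith
    have huεmem : uε ∈ Bk m k := by
      constructor
      · intro j
        refine ⟨huεpos j, ?_⟩
        have h1 := (hmem.1 j).2
        have h2 := (hu.1 j).2
        simp only [huεdef, hδdef]
        nlinarith
      · have h1 := hmem.2
        have h2 := hu.2
        have hs : ∑ j, uε j = (1 - ε) * ∑ j, ustar j + ε * ∑ j, u j := by
          rw [Finset.mul_sum, Finset.mul_sum, ← Finset.sum_add_distrib]
          exact Finset.sum_congr rfl fun j _ => by simp only [huεdef, hδdef]; ring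
        rw [hs]
        nlinarith
    have hrw : ∀ j, lam * d j + uε j = a j + ε * δ j := fun j => by
      simp only [huεdef, hadef]; ring
    have hden : ∀ j, 0 < a j + ε * δ j := by
      intro j
      rw [← hrw j]
      exact add_pos_of_pos_of_nonneg (mul_pos hlam (hd j)) (huεpos j)
    have hid : ∀ j, ε * ((d j * T j / (a j) ^ 2) * δ j)
        = d j * T j / a j - d j * T j / (a j + ε * δ j)
          + d j * T j * ε ^ 2 * (δ j) ^ 2 / ((a j) ^ 2 * (a j + ε * δ j)) := by
      intro j
      have h1 := (hapos j).ne'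
      have h2 := (hden j).ne'
      field_simp
      ring
    have herr : ∀ j, d j * T j * ε ^ 2 * (δ j) ^ 2 / ((a j) ^ 2 * (a j + ε * δ j))
        ≤ ε ^ 2 * (d j * T j * (δ j) ^ 2 / ((a j) ^ 2 * (lam * d j))) := by
      intro j
      have hle : lam * d j ≤ a j + ε * δ j := by
        have := huεpos j
        rw [← hrw j]
        linarith
      have h3 : (0:ℝ) < lam * d j := mul_pos hlam (hd j)
      have h4 := hapos j
      have h5 := hd j
      have h6 := hT j
      rw [show ε ^ 2 * (d j * T j * (δ j) ^ 2 / ((a j) ^ 2 * (lam * d j)))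
          = d j * T j * ε ^ 2 * (δ j) ^ 2 / ((a j) ^ 2 * (lam * d j)) by ring]
      gcongr
    have hsum := hust' uε huεmem
    have hsum' : ∑ j, d j * T j / a j ≤ ∑ j, d j * T j / (a j + ε * δ j) := by
      have h9 : ∑ j, d j * T j / (lam * d j + uε j) = ∑ j, d j * T j / (a j + ε * δ j) :=
        Finset.sum_congr rfl fun j _ => by rw [hrw j]
      rw [← h9]
      exact hsum
    have herr' : ∑ j, d j * T j * ε ^ 2 * (δ j) ^ 2 / ((a j) ^ 2 * (a j + ε * δ j))
        ≤ ε ^ 2 * C := by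
      rw [hCdef, Finset.mul_sum]
      exact Finset.sum_le_sum fun j _ => herr j
    have hfinal : ε * ∑ j, (d j * T j / (a j) ^ 2) * δ j ≤ ε * (ε * C) := by
      calc ε * ∑ j, (d j * T j / (a j) ^ 2) * δ j
          = ∑ j, ε * ((d j * T j / (a j) ^ 2) * δ j) := by rw [Finset.mul_sum]
        _ = ∑ j, (d j * T j / a j - d j * T j / (a j + ε * δ j)
              + d j * T j * ε ^ 2 * (δ j) ^ 2 / ((a j) ^ 2 * (a j + ε * δ j))) :=
            Finset.sum_congr rfl fun j _ => hid j
        _ = ((∑ j, d j * T j / a j) - (∑ j, d j * T j / (a j + ε * δ j)))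
              + ∑ j, d j * T j * ε ^ 2 * (δ j) ^ 2 / ((a j) ^ 2 * (a j + ε * δ j)) := by
            rw [Finset.sum_add_distrib, Finset.sum_sub_distrib]
        _ ≤ ε * (ε * C) := by nlinarith [hsum', herr']
    exact le_of_mul_le_mul_left hfinal hε0
  by_contra hcon
  push_neg at hcon
  have hS : 0 < ∑ j, (d j * T j / (a j) ^ 2) * δ j := by
    have : ∑ j, (d j * T j / (a j) ^ 2) * δ j
        = ∑ j, (d j * T j / (a j) ^ 2) * u j - ∑ j, (d j * T j / (a j) ^ 2) * ustar j := by
      rw [← Finset.sum_sub_distrib]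
      exact Finset.sum_congr rfl fun j _ => by simp only [hδdef]; ring
    rw [this]
    simp only [hadef] at *
    linarith
  set S := ∑ j, (d j * T j / (a j) ^ 2) * δ j with hSdef
  have hε0 : 0 < min 1 (S / (2 * (C + 1))) := by
    apply lt_min one_pos
    positivity
  have hkey := key _ hε0 (min_le_left _ _)
  have h7 : min 1 (S / (2 * (C + 1))) ≤ S / (2 * (C + 1)) := min_le_right _ _
  have h8 : S / (2 * (C + 1)) * C ≤ S / 2 := by
    rw [div_mul_eq_mul_div, div_le_div_iff₀ (by positivity) (by norm_num)]
    nlinarith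
  nlinarith [mul_le_mul_of_nonneg_right h7 hC0]


private lemma young_aux {A B x : ℝ} (hA : 0 ≤ A) (hB : 0 ≤ B) (hx : x ^ 2 ≤ A * B) :
    2 * x ≤ A + B := by
  rcases le_or_gt x 0 with hP | hP
  · linarith
  · nlinarith [sq_nonneg (A - B), hx, (show (0:ℝ) < A + B + 2 * x by linarith)]

private lemma le_fconj {n : ℕ} (f : (Fin n → ℝ) → EReal) (y θ : Fin n → ℝ) :
    ((∑ i, y i * θ i : ℝ) : EReal) - f θ ≤ fconj f y :=
  le_iSup (fun θ => ((∑ i, y i * θ i : ℝ) : EReal) - f θ) θ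

private lemma fconj_le {n : ℕ} (f : (Fin n → ℝ) → EReal) (y : Fin n → ℝ) {B : EReal}
    (h : ∀ θ, ((∑ i, y i * θ i : ℝ) : EReal) - f θ ≤ B) : fconj f y ≤ B := iSup_le h

set_option maxHeartbeats 4000000 in
/-- if `u*` minimizes `u ↦ Σ_j φ(√d_j·t_{s_j}, λd_j + u_j)` over
`B_k` and `v` is the proximal point `prox_{λ·GS_k}(t)` (i.e. the global
minimizer of `θ ↦ λ·GS_k(θ) + ½‖θ-t‖²`), then groupwise
`v_{s_j} = (u*_j/(λd_j + u*_j))·t_{s_j}`. -/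
theorem prox_formula {n m : ℕ} (k : ℕ) (hk1 : 1 ≤ k) (hkm : k ≤ m)
    (s : Fin m → Finset (Fin n))
    (hdisj : ∀ j j', j ≠ j' → Disjoint (s j) (s j'))
    (hcover : ∀ i, ∃ j, i ∈ s j)
    (d : Fin m → ℝ) (hd : ∀ j, 0 < d j)
    (lam : ℝ) (hlam : 0 < lam) (t : Fin n → ℝ)
    (ustar : Fin m → ℝ) (hmem : ustar ∈ Bk m k)
    (hust : ∀ u ∈ Bk m k,
      (∑ j, phi (Real.sqrt (d j) • groupProj (s j) t) (lam * d j + ustar j))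
        ≤ ∑ j, phi (Real.sqrt (d j) • groupProj (s j) t) (lam * d j + u j))
    (v : Fin n → ℝ)
    (hv : ∀ θ : Fin n → ℝ,
      ((lam : ℝ) : EReal) * fconj (fconj (gsk s d k)) v
          + ((((1 : ℝ) / 2) * ∑ i, (v i - t i) ^ 2 : ℝ) : EReal)
        ≤ ((lam : ℝ) : EReal) * fconj (fconj (gsk s d k)) θ
          + ((((1 : ℝ) / 2) * ∑ i, (θ i - t i) ^ 2 : ℝ) : EReal)) :
    ∀ j, groupProj (s j) v = (ustar j / (lam * d j + ustar j)) • groupProj (s j) t := by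
  classical
  have hu0 : ∀ j, 0 ≤ ustar j := fun j => (hmem.1 j).1
  have hu1 : ∀ j, ustar j ≤ 1 := fun j => (hmem.1 j).2
  set a : Fin m → ℝ := fun j => lam * d j + ustar j with hadef
  have hapos : ∀ j, 0 < a j := fun j =>
    add_pos_of_pos_of_nonneg (mul_pos hlam (hd j)) (hu0 j)
  set T : Fin m → ℝ := fun j => ∑ i ∈ s j, (t i) ^ 2 with hTdef
  have hT : ∀ j, 0 ≤ T j := fun j => Finset.sum_nonneg fun i _ => sq_nonneg _
  set c : Fin m → ℝ := fun j => ustar j / a j with hcdef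
  have hc0 : ∀ j, 0 ≤ c j := fun j => div_nonneg (hu0 j) (hapos j).le
  set w : Fin n → ℝ := fun i => ∑ j, if i ∈ s j then c j * t i else 0 with hwdef
  have hwg : ∀ j, ∀ i ∈ s j, w i = c j * t i := by
    intro j i hi
    simp only [hwdef]
    rw [Finset.sum_eq_single j]
    · rw [if_pos hi]
    · intro j' _ hj'
      rw [if_neg fun hij' => (Finset.disjoint_left.mp (hdisj j' j hj') hij') hi]
    · intro h; exact absurd (Finset.mem_univ j) h
  set y : Fin n → ℝ := fun i => (t i - w i) / lam with hydef
  have hyg : ∀ j, ∀ i ∈ s j, y i = (d j / a j) * t i := by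
    intro j i hi
    simp only [hydef]
    rw [hwg j i hi]
    have h1 := (hapos j).ne'
    have h2 := hlam.ne'
    simp only [hcdef]
    field_simp
    simp only [hadef]
    ring
  set q : Fin m → ℝ := fun j => d j * T j / (a j) ^ 2 with hqdef
  have hq0 : ∀ j, 0 ≤ q j := by
    intro j
    have := hd j; have := hT j; have := hapos j
    simp only [hqdef]
    positivity
  -- partition lemma for sums over Fin n
  have hpart : ∀ f : Fin n → ℝ, ∑ i, f i = ∑ j, ∑ i ∈ s j, f i := by
    intro f
    have huniv : (Finset.univ : Finset (Fin n)) = Finset.univ.biUnion s := by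
      ext i
      simp only [Finset.mem_univ, Finset.mem_biUnion, true_iff]
      obtain ⟨j, hj⟩ := hcover i
      exact ⟨j, trivial, hj⟩
    rw [huniv, Finset.sum_biUnion]
    intro j _ j' _ hjj'
    exact hdisj j j' hjj'
  -- group sums
  have hysq : ∀ j, ∑ i ∈ s j, (y i) ^ 2 = d j * q j := by
    intro j
    have h1 : ∀ i ∈ s j, (y i) ^ 2 = (d j / a j) ^ 2 * (t i) ^ 2 := by
      intro i hi; rw [hyg j i hi]; ring
    rw [Finset.sum_congr rfl h1, ← Finset.mul_sum]
    have := (hapos j).ne'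
    simp only [hqdef, hTdef]
    field_simp
  have hwy : ∀ j, ∑ i ∈ s j, w i * y i = q j * ustar j := by
    intro j
    have h1 : ∀ i ∈ s j, w i * y i = (c j * (d j / a j)) * (t i) ^ 2 := by
      intro i hi; rw [hyg j i hi, hwg j i hi]; ring
    rw [Finset.sum_congr rfl h1, ← Finset.mul_sum]
    have := (hapos j).ne'
    simp only [hqdef, hTdef, hcdef]
    field_simp
  -- reduce hust to a real statement
  have hust' : ∀ u ∈ Bk m k,
      ∑ j, d j * T j / (lam * d j + ustar j) ≤ ∑ j, d j * T j / (lam * d j + u j) := by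
    intro u hu
    have hpos : ∀ (uu : Fin m → ℝ), uu ∈ Bk m k → ∀ j, 0 < lam * d j + uu j := fun uu huu j =>
      add_pos_of_pos_of_nonneg (mul_pos hlam (hd j)) ((huu.1 j).1)
    have hphi : ∀ (uu : Fin m → ℝ), uu ∈ Bk m k → ∀ j : Fin m,
        phi (Real.sqrt (d j) • groupProj (s j) t) (lam * d j + uu j)
          = ((d j * T j / (lam * d j + uu j) : ℝ) : EReal) := by
      intro uu huu j
      have h1 : ∀ i, ((Real.sqrt (d j) • groupProj (s j) t) i) ^ 2
          = if i ∈ s j then d j * (t i) ^ 2 else 0 := by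
        intro i
        simp only [Pi.smul_apply, smul_eq_mul, groupProj]
        split
        · rw [mul_pow, Real.sq_sqrt (hd j).le]
        · ring
      simp only [phi, if_pos (hpos uu huu j)]
      congr 2
      rw [Finset.sum_congr rfl fun i _ => h1 i, Finset.sum_ite_mem, Finset.univ_inter,
        ← Finset.mul_sum]
    have h := hust u hu
    rw [Finset.sum_congr rfl fun j _ => hphi ustar hmem j,
        Finset.sum_congr rfl fun j _ => hphi u hu j, ← ereal_coe_sum, ← ereal_coe_sum] at h
    exact EReal.coe_le_coe_iff.mp h
  -- variational inequality
  have hVI : ∀ u ∈ Bk m k, ∑ j, q j * u j ≤ ∑ j, q j * ustar j := by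
    intro u hu
    have h := vi_lemma k d T ustar hd hT lam hlam hmem hust' u hu
    simp only [hqdef, hadef]
    calc ∑ j, d j * T j / (lam * d j + ustar j) ^ 2 * u j
        = ∑ j, (d j * T j / (lam * d j + ustar j) ^ 2) * u j := rfl
      _ ≤ ∑ j, (d j * T j / (lam * d j + ustar j) ^ 2) * ustar j := h
  set R : ℝ := ∑ j, q j * ustar j with hRdef
  -- conjugate lower bound
  have hL : ∀ y' : Fin n → ℝ,
      ((((1:ℝ)/2) * ∑ j, ustar j * (∑ i ∈ s j, (y' i) ^ 2) / d j : ℝ) : EReal)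
        ≤ fconj (gsk s d k) y' := by
    intro y'
    set q' : Fin m → ℝ := fun j => (∑ i ∈ s j, (y' i) ^ 2) / d j with hq'def
    have hq'0 : ∀ j, 0 ≤ q' j := fun j =>
      div_nonneg (Finset.sum_nonneg fun i _ => sq_nonneg _) (hd j).le
    obtain ⟨J, hJk, hJle⟩ := lp_top_k hk1 q' ustar hq'0 hu0 hu1 hmem.2
    set θh : Fin n → ℝ := fun i => ∑ j ∈ J, if i ∈ s j then y' i / d j else 0 with hθdef
    have hθg : ∀ (j : Fin m), ∀ i ∈ s j, θh i = if j ∈ J then y' i / d j else 0 := by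
      intro j i hi
      simp only [hθdef]
      by_cases hjJ : j ∈ J
      · rw [if_pos hjJ, Finset.sum_eq_single_of_mem j hjJ]
        · rw [if_pos hi]
        · intro j' _ hj'
          rw [if_neg fun hij' => (Finset.disjoint_left.mp (hdisj j' j hj') hij') hi]
      · rw [if_neg hjJ]
        refine Finset.sum_eq_zero fun j' hj' => ?_
        refine if_neg fun hij' => hjJ ?_
        by_cases hjj' : j' = j
        · exact hjj' ▸ hj'
        · exact absurd hi (Finset.disjoint_left.mp (hdisj j' j hjj') hij')
    have hnnz : nnzGroups s θh ≤ k := by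
      have hsub : (Finset.univ.filter fun j => groupProj (s j) θh ≠ 0) ⊆ J := by
        intro j hj
        rw [Finset.mem_filter] at hj
        by_contra hjJ
        refine hj.2 (funext fun i => ?_)
        simp only [groupProj, Pi.zero_apply]
        split
        · rename_i hi; rw [hθg j i hi, if_neg hjJ]
        · rfl
      exact le_trans (Finset.card_le_card hsub) hJk
    have hquad : ∑ j, d j * ∑ i ∈ s j, (θh i) ^ 2 = ∑ j ∈ J, q' j := by
      have h1 : ∀ j, d j * ∑ i ∈ s j, (θh i) ^ 2 = if j ∈ J then q' j else 0 := by
        intro j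
        by_cases hjJ : j ∈ J
        · rw [if_pos hjJ]
          have h2 : ∀ i ∈ s j, (θh i) ^ 2 = (y' i) ^ 2 / (d j) ^ 2 := by
            intro i hi; rw [hθg j i hi, if_pos hjJ]; ring
          rw [Finset.sum_congr rfl h2, ← Finset.sum_div]
          have hd' := (hd j).ne'
          simp only [hq'def]
          field_simp
        · rw [if_neg hjJ]
          have h2 : ∀ i ∈ s j, (θh i) ^ 2 = 0 := by
            intro i hi; rw [hθg j i hi, if_neg hjJ]; norm_num
          rw [Finset.sum_congr rfl h2, Finset.sum_const_zero, mul_zero]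
      rw [Finset.sum_congr rfl fun j _ => h1 j, Finset.sum_ite_mem, Finset.univ_inter]
    have hinner : ∑ i, y' i * θh i = ∑ j ∈ J, q' j := by
      rw [hpart fun i => y' i * θh i]
      have h1 : ∀ j, ∑ i ∈ s j, y' i * θh i = if j ∈ J then q' j else 0 := by
        intro j
        by_cases hjJ : j ∈ J
        · rw [if_pos hjJ]
          have h2 : ∀ i ∈ s j, y' i * θh i = (y' i) ^ 2 / d j := by
            intro i hi; rw [hθg j i hi, if_pos hjJ]; ring
          rw [Finset.sum_congr rfl h2, ← Finset.sum_div]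
        · rw [if_neg hjJ]
          refine Finset.sum_eq_zero fun i hi => by rw [hθg j i hi, if_neg hjJ, mul_zero]
      rw [Finset.sum_congr rfl fun j _ => h1 j, Finset.sum_ite_mem, Finset.univ_inter]
    have h4 : gsk s d k θh = (((1:ℝ)/2 * ∑ j ∈ J, q' j : ℝ) : EReal) := by
      unfold gsk
      rw [if_pos hnnz, hquad]
    have h3 := le_fconj (gsk s d k) y' θh
    rw [h4, hinner, ← EReal.coe_sub] at h3
    refine le_trans ?_ h3
    apply EReal.coe_le_coe_iff.mpr
    have h5 : ∑ j, ustar j * (∑ i ∈ s j, (y' i) ^ 2) / d j = ∑ j, ustar j * q' j := by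
      refine Finset.sum_congr rfl fun j _ => ?_
      simp only [hq'def]
      ring
    rw [h5]
    linarith [hJle]
  -- biconjugate upper bound at w
  have hcs2 : ∀ (j : Fin m) (f g : Fin n → ℝ),
      (∑ i ∈ s j, f i * g i) ^ 2 ≤ (∑ i ∈ s j, (f i) ^ 2) * ∑ i ∈ s j, (g i) ^ 2 :=
    fun j f g => Finset.sum_mul_sq_le_sq_mul_sq (s j) f g
  have hBW : fconj (fconj (gsk s d k)) w ≤ ((R / 2 : ℝ) : EReal) := by
    refine fconj_le _ _ fun y' => ?_
    refine le_trans (EReal.sub_le_sub le_rfl (hL y')) ?_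
    rw [← EReal.coe_sub]
    apply EReal.coe_le_coe_iff.mpr
    have hgroup : ∀ j, (∑ i ∈ s j, w i * y' i)
        - 1/2 * (ustar j * (∑ i ∈ s j, (y' i) ^ 2) / d j) ≤ 1/2 * (q j * ustar j) := by
      intro j
      have h1 : ∑ i ∈ s j, w i * y' i = c j * ∑ i ∈ s j, t i * y' i := by
        rw [Finset.mul_sum]
        exact Finset.sum_congr rfl fun i hi => by rw [hwg j i hi]; ring
      rw [h1]
      have hY0 : (0:ℝ) ≤ ∑ i ∈ s j, (y' i) ^ 2 := Finset.sum_nonneg fun i _ => sq_nonneg _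
      set P := ∑ i ∈ s j, t i * y' i with hPdef
      set Y := ∑ i ∈ s j, (y' i) ^ 2 with hYdef
      have hcs' : P ^ 2 ≤ T j * Y := by
        have := hcs2 j t y'
        simp only [hPdef, hYdef, hTdef]
        exact this
      rcases eq_or_lt_of_le (hu0 j) with h0 | hupos
      · simp only [hcdef, hqdef, ← h0]
        norm_num
      · have hd' := hd j
        have ha' := hapos j
        have hT' := hT j
        -- key two-sided Young inequality
        have hx : (a j * d j * P) ^ 2 ≤ ((d j) ^ 2 * T j) * ((a j) ^ 2 * Y) := by
          nlinarith [mul_le_mul_of_nonneg_left hcs'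
            (by positivity : (0:ℝ) ≤ (a j) ^ 2 * (d j) ^ 2)]
        have h2ad' := young_aux (mul_nonneg (by positivity) hT')
          (mul_nonneg (by positivity) hY0) hx
        have h2ad : 2 * a j * d j * P ≤ (d j) ^ 2 * T j + (a j) ^ 2 * Y := by
          linarith [h2ad']
        have hmul := mul_le_mul_of_nonneg_left h2ad
          (by positivity : (0:ℝ) ≤ ustar j / (2 * (a j) ^ 2 * d j))
        have e1 : ustar j / (2 * (a j) ^ 2 * d j) * (2 * a j * d j * P)
            = ustar j / a j * P := by
          field_simp
        have e2 : ustar j / (2 * (a j) ^ 2 * d j) * ((d j) ^ 2 * T j + (a j) ^ 2 * Y)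
            = 1/2 * (d j * T j / (a j) ^ 2 * ustar j) + 1/2 * (ustar j * Y / d j) := by
          field_simp
        rw [e1, e2] at hmul
        simp only [hcdef, hqdef]
        linarith
    have hsum := Finset.sum_le_sum fun j (_ : j ∈ Finset.univ) => hgroup j
    rw [Finset.sum_sub_distrib] at hsum
    have hm1 : ∑ j, (1:ℝ)/2 * (ustar j * (∑ i ∈ s j, (y' i) ^ 2) / d j)
        = 1/2 * ∑ j, ustar j * (∑ i ∈ s j, (y' i) ^ 2) / d j := by
      rw [Finset.mul_sum]
    have hm2 : ∑ j, (1:ℝ)/2 * (q j * ustar j) = R / 2 := by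
      rw [hRdef, Finset.sum_div]
      exact Finset.sum_congr rfl fun j _ => by ring
    rw [hpart fun i => w i * y' i]
    linarith
  -- conjugate upper bound at y
  have hG : fconj (gsk s d k) y ≤ ((R / 2 : ℝ) : EReal) := by
    refine fconj_le _ _ fun θ => ?_
    by_cases hnz : nnzGroups s θ ≤ k
    · unfold gsk
      rw [if_pos hnz, ← EReal.coe_sub]
      apply EReal.coe_le_coe_iff.mpr
      set u₀ : Fin m → ℝ := fun j => if groupProj (s j) θ ≠ 0 then 1 else 0 with hu₀def
      have hu₀mem : u₀ ∈ Bk m k := by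
        constructor
        · intro j
          simp only [hu₀def]
          split <;> norm_num
        · have hb : ∑ j, u₀ j = ((Finset.univ.filter fun j => groupProj (s j) θ ≠ 0).card : ℝ) := by
            simp only [hu₀def]
            rw [Finset.sum_boole]
          rw [hb]
          exact_mod_cast hnz
      have hgroup : ∀ j, (∑ i ∈ s j, y i * θ i) - 1/2 * (d j * ∑ i ∈ s j, (θ i) ^ 2)
          ≤ 1/2 * (q j * u₀ j) := by
        intro j
        by_cases hz : groupProj (s j) θ = 0
        · have hθ0 : ∀ i ∈ s j, θ i = 0 := by
            intro i hi
            have := congrFun hz i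
            simpa [groupProj, if_pos hi] using this
          have hs1 : ∑ i ∈ s j, y i * θ i = 0 :=
            Finset.sum_eq_zero fun i hi => by rw [hθ0 i hi, mul_zero]
          have hs2 : ∑ i ∈ s j, (θ i) ^ 2 = 0 :=
            Finset.sum_eq_zero fun i hi => by rw [hθ0 i hi]; norm_num
          have hu₀0 : u₀ j = 0 := by
            simp only [hu₀def]
            rw [if_neg (not_not_intro hz)]
          rw [hs1, hs2, hu₀0]
          norm_num
        · have hu₀1 : u₀ j = 1 := by simp only [hu₀def, if_pos hz]
          rw [hu₀1, mul_one]
          set P := ∑ i ∈ s j, y i * θ i with hPdef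
          set Θ := ∑ i ∈ s j, (θ i) ^ 2 with hΘdef
          have hΘ0 : (0:ℝ) ≤ Θ := Finset.sum_nonneg fun i _ => sq_nonneg _
          have hcs' : P ^ 2 ≤ (d j * q j) * Θ := by
            have h1 := hcs2 j y θ
            rw [hysq j] at h1
            exact h1
          have hd' := hd j
          have hq' := hq0 j
          have hx : (d j * P) ^ 2 ≤ ((d j) ^ 2 * Θ) * (d j * q j) := by
            nlinarith [mul_le_mul_of_nonneg_left hcs' (by positivity : (0:ℝ) ≤ (d j) ^ 2)]
          have hy := young_aux (mul_nonneg (by positivity) hΘ0)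
            (mul_nonneg hd'.le hq') hx
          nlinarith [hy, hd', mul_pos hd' hd']
      have hsum := Finset.sum_le_sum fun j (_ : j ∈ Finset.univ) => hgroup j
      rw [Finset.sum_sub_distrib] at hsum
      have hm1 : ∑ j, (1:ℝ)/2 * (d j * ∑ i ∈ s j, (θ i) ^ 2)
          = 1/2 * ∑ j, d j * ∑ i ∈ s j, (θ i) ^ 2 := by
        rw [Finset.mul_sum]
      have hm2 : ∑ j, (1:ℝ)/2 * (q j * u₀ j) = 1/2 * ∑ j, q j * u₀ j := by
        rw [Finset.mul_sum]
      have hVI' := hVI u₀ hu₀mem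
      rw [hpart fun i => y i * θ i]
      simp only [hRdef]
      linarith
    · unfold gsk
      rw [if_neg hnz, EReal.sub_top]
      exact bot_le
  -- biconjugate lower bound at v
  have hBV : (((∑ i, v i * y i) - R / 2 : ℝ) : EReal) ≤ fconj (fconj (gsk s d k)) v := by
    have h1 : ((∑ i, v i * y i : ℝ) : EReal) - fconj (gsk s d k) y
        ≤ fconj (fconj (gsk s d k)) v := le_fconj (fconj (gsk s d k)) v y
    refine le_trans ?_ h1
    rw [EReal.coe_sub]
    exact EReal.sub_le_sub le_rfl hG
  -- nonnegativity of the biconjugate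
  have hgsk0 : ∀ θ : Fin n → ℝ, (0 : EReal) ≤ gsk s d k θ := by
    intro θ
    have hnn : (0:ℝ) ≤ 1 / 2 * ∑ j, d j * ∑ i ∈ s j, (θ i) ^ 2 := by
      apply mul_nonneg (by norm_num)
      exact Finset.sum_nonneg fun j _ =>
        mul_nonneg (hd j).le (Finset.sum_nonneg fun i _ => sq_nonneg _)
    unfold gsk
    split
    · exact EReal.coe_nonneg.mpr hnn
    · exact le_top
  have hconj0 : fconj (gsk s d k) 0 ≤ (0 : EReal) := by
    refine fconj_le _ _ fun θ => ?_
    have h0 : ((∑ i, (0 : Fin n → ℝ) i * θ i : ℝ) : EReal) = ((0:ℝ) : EReal) := by norm_num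
    rw [h0]
    calc ((0:ℝ) : EReal) - gsk s d k θ ≤ (0:EReal) - (0:EReal) :=
          EReal.sub_le_sub (by norm_num) (hgsk0 θ)
      _ = 0 := by simp
  have hBW0 : (0 : EReal) ≤ fconj (fconj (gsk s d k)) w := by
    have h1 := le_fconj (fconj (gsk s d k)) w (0 : Fin n → ℝ)
    have h0 : ((∑ i, w i * (0 : Fin n → ℝ) i : ℝ) : EReal) = ((0:ℝ) : EReal) := by norm_num
    rw [h0] at h1
    refine le_trans ?_ h1
    calc (0 : EReal) = (0:EReal) - (0:EReal) := by simp
      _ ≤ ((0:ℝ) : EReal) - fconj (gsk s d k) 0 :=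
          EReal.sub_le_sub (by norm_num) hconj0
  -- combine everything
  have hvw : v = w := by
    have hne_top : fconj (fconj (gsk s d k)) w ≠ ⊤ := by
      intro h
      rw [h] at hBW
      exact absurd hBW (by simp)
    have hne_bot : fconj (fconj (gsk s d k)) w ≠ ⊥ := by
      intro h
      rw [h] at hBW0
      exact absurd hBW0 (by simp)
    set ρ := (fconj (fconj (gsk s d k)) w).toReal with hρdef
    have hρ : fconj (fconj (gsk s d k)) w = ((ρ : ℝ) : EReal) :=
      (EReal.coe_toReal hne_top hne_bot).symm
    have hρle : ρ ≤ R / 2 := by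
      rw [hρ] at hBW
      exact EReal.coe_le_coe_iff.mp hBW
    have hmain := hv w
    rw [hρ] at hmain
    have hvne_top : fconj (fconj (gsk s d k)) v ≠ ⊤ := by
      intro h
      rw [h, EReal.coe_mul_top_of_pos hlam, EReal.top_add_coe,
        ← EReal.coe_mul, ← EReal.coe_add] at hmain
      exact absurd (lt_of_le_of_lt hmain (EReal.coe_lt_top _)) (lt_irrefl _)
    have hvne_bot : fconj (fconj (gsk s d k)) v ≠ ⊥ := by
      intro h
      rw [h, le_bot_iff] at hBV
      exact EReal.coe_ne_bot _ hBV
    set σ := (fconj (fconj (gsk s d k)) v).toReal with hσdef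
    have hσ : fconj (fconj (gsk s d k)) v = ((σ : ℝ) : EReal) :=
      (EReal.coe_toReal hvne_top hvne_bot).symm
    have hσge : (∑ i, v i * y i) - R / 2 ≤ σ := by
      rw [hσ] at hBV
      exact EReal.coe_le_coe_iff.mp hBV
    rw [hσ, ← EReal.coe_mul, ← EReal.coe_mul, ← EReal.coe_add, ← EReal.coe_add] at hmain
    have hreal := EReal.coe_le_coe_iff.mp hmain
    -- real algebra
    have hvyid : lam * ∑ i, v i * y i = ∑ i, v i * (t i - w i) := by
      rw [Finset.mul_sum]
      refine Finset.sum_congr rfl fun i _ => ?_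
      simp only [hydef]
      field_simp
    have hRw : R = ∑ i, w i * y i := by
      rw [hRdef, hpart fun i => w i * y i]
      exact (Finset.sum_congr rfl fun j _ => hwy j).symm
    have hRid : lam * R = ∑ i, w i * (t i - w i) := by
      rw [hRw, Finset.mul_sum]
      refine Finset.sum_congr rfl fun i _ => ?_
      simp only [hydef]
      field_simp
    have hexp : ∑ i, (v i - w i) ^ 2
        = 2 * ∑ i, v i * (t i - w i) - 2 * ∑ i, w i * (t i - w i)
          + ∑ i, (v i - t i) ^ 2 - ∑ i, (w i - t i) ^ 2 := by
      rw [Finset.mul_sum, Finset.mul_sum, ← Finset.sum_sub_distrib,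
        ← Finset.sum_add_distrib, ← Finset.sum_sub_distrib]
      exact Finset.sum_congr rfl fun i _ => by ring
    have h1 := mul_le_mul_of_nonneg_left hσge hlam.le
    have h2 := mul_le_mul_of_nonneg_left hρle hlam.le
    have hsq : ∑ i, (v i - w i) ^ 2 ≤ 0 := by nlinarith
    have hzero : ∑ i, (v i - w i) ^ 2 = 0 :=
      le_antisymm hsq (Finset.sum_nonneg fun i _ => sq_nonneg _)
    funext i
    have := (Finset.sum_eq_zero_iff_of_nonneg fun i _ => sq_nonneg (v i - w i)).mp
      hzero i (Finset.mem_univ i)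
    have h3 : v i - w i = 0 := by
      have := sq_eq_zero_iff.mp this
      exact this
    linarith
  intro j
  funext i
  by_cases hi : i ∈ s j
  · simp only [groupProj, if_pos hi, hvw, Pi.smul_apply, smul_eq_mul]
    rw [hwg j i hi]
  · simp only [groupProj, if_neg hi, Pi.smul_apply, smul_eq_mul, mul_zero]
end
end

section
/- For λ > 0 and t ∈ ℝⁿ, the proximal operator v = prox_{λGS_k}(t) satisfies: (i) ‖v_{s_j}‖₂ ≤ ‖t_{s_j}‖₂ for every group j; (ii) v_{s_j} = 0 whenever t_{s_j} = 0; and (iii) v_{s_j} is a nonnegative scalar multiple of t_{s_j} for every j (with scalar in [0, 1/(λ d_j · 0 + 1)] ⊆ [0,1]). -/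
open Finset

noncomputable section
open scoped Classical BigOperators

-- auxiliary
def Sk (m k : ℕ) : Finset (Finset (Fin m)) :=
  Finset.univ.powerset.filter fun S => S.card ≤ k

lemma Sk_nonempty (m k : ℕ) : (Sk m k).Nonempty :=
  ⟨∅, by simp [Sk]⟩

def Tfun {n m : ℕ} (s : Fin m → Finset (Fin n)) (d : Fin m → ℝ) (k : ℕ)
    (y : Fin n → ℝ) : ℝ :=
  (Sk m k).sup' (Sk_nonempty m k) fun S => ∑ l ∈ S, (∑ i ∈ s l, (y i) ^ 2) / (2 * d l)

lemma Tfun_nonneg {n m : ℕ} (s : Fin m → Finset (Fin n)) (d : Fin m → ℝ) (k : ℕ)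
    (y : Fin n → ℝ) : 0 ≤ Tfun s d k y := by
  have h := Finset.le_sup' (fun S : Finset (Fin m) =>
      ∑ l ∈ S, (∑ i ∈ s l, (y i) ^ 2) / (2 * d l)) (show ∅ ∈ Sk m k by simp [Sk])
  exact le_trans (by simp) h

lemma Tfun_zero {n m : ℕ} (s : Fin m → Finset (Fin n)) (d : Fin m → ℝ) (k : ℕ) :
    Tfun s d k 0 = 0 := by
  refine le_antisymm ?_ (Tfun_nonneg s d k 0)
  apply Finset.sup'_le
  intro S _
  simp

lemma Tfun_congr {n m : ℕ} (s : Fin m → Finset (Fin n)) (d : Fin m → ℝ) (k : ℕ)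
    {y y' : Fin n → ℝ} (h : ∀ l, ∑ i ∈ s l, (y' i) ^ 2 = ∑ i ∈ s l, (y i) ^ 2) :
    Tfun s d k y' = Tfun s d k y := by
  unfold Tfun
  exact Finset.sup'_congr _ rfl fun S _ => Finset.sum_congr rfl fun l _ => by rw [h l]

lemma Tfun_lip {n m : ℕ} (s : Fin m → Finset (Fin n)) (d : Fin m → ℝ) (k : ℕ)
    (hdisj : ∀ j j', j ≠ j' → Disjoint (s j) (s j')) (j : Fin m) (hd : 0 < d j)
    {y y' : Fin n → ℝ} (hoff : ∀ i, i ∉ s j → y' i = y i)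
    (hN : ∑ i ∈ s j, (y i) ^ 2 ≤ ∑ i ∈ s j, (y' i) ^ 2) :
    Tfun s d k y' ≤ Tfun s d k y
      + ((∑ i ∈ s j, (y' i) ^ 2) - ∑ i ∈ s j, (y i) ^ 2) / (2 * d j) := by
  set δ := ((∑ i ∈ s j, (y' i) ^ 2) - ∑ i ∈ s j, (y i) ^ 2) / (2 * d j) with hδdef
  have hδ : 0 ≤ δ := div_nonneg (sub_nonneg.2 hN) (by positivity)
  have heq : ∀ l, l ≠ j → ∑ i ∈ s l, (y' i) ^ 2 = ∑ i ∈ s l, (y i) ^ 2 := by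
    intro l hl
    exact Finset.sum_congr rfl fun i hi => by
      rw [hoff i (Finset.disjoint_left.mp (hdisj l j hl) hi)]
  show Tfun s d k y' ≤ _
  unfold Tfun
  apply Finset.sup'_le
  intro S hS
  have hmain : ∑ l ∈ S, (∑ i ∈ s l, (y' i) ^ 2) / (2 * d l)
      ≤ (∑ l ∈ S, (∑ i ∈ s l, (y i) ^ 2) / (2 * d l)) + δ := by
    by_cases hj : j ∈ S
    · have hsplit : ∑ l ∈ S, ((∑ i ∈ s l, (y' i) ^ 2) / (2 * d l)
          - (∑ i ∈ s l, (y i) ^ 2) / (2 * d l)) = δ := by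
        rw [Finset.sum_eq_single_of_mem j hj]
        · rw [div_sub_div_same]
        · intro b _ hb; rw [heq b hb]; ring
      rw [Finset.sum_sub_distrib] at hsplit
      linarith
    · have : ∑ l ∈ S, (∑ i ∈ s l, (y' i) ^ 2) / (2 * d l)
          = ∑ l ∈ S, (∑ i ∈ s l, (y i) ^ 2) / (2 * d l) :=
        Finset.sum_congr rfl fun l hl => by
          rw [heq l (by rintro rfl; exact hj hl)]
      linarith
  refine le_trans hmain (add_le_add ?_ (le_refl δ))
  exact Finset.le_sup' (fun S : Finset (Fin m) =>
    ∑ l ∈ S, (∑ i ∈ s l, (y i) ^ 2) / (2 * d l)) hS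

lemma groupProj_eq_zero {n : ℕ} {sj : Finset (Fin n)} {θ : Fin n → ℝ} :
    groupProj sj θ = 0 ↔ ∀ i ∈ sj, θ i = 0 := by
  constructor
  · intro h i hi
    have := congrFun h i
    simpa [groupProj, hi] using this
  · intro h
    funext i
    by_cases hi : i ∈ sj
    · simp [groupProj, hi, h i hi]
    · simp [groupProj, hi]

lemma sum_partition {n m : ℕ} (s : Fin m → Finset (Fin n))
    (hdisj : ∀ j j', j ≠ j' → Disjoint (s j) (s j'))
    (hcover : ∀ i, ∃ j, i ∈ s j) (F : Fin n → ℝ) :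
    ∑ i, F i = ∑ l, ∑ i ∈ s l, F i := by
  have hbi : Finset.univ.biUnion s = Finset.univ := by
    apply Finset.eq_univ_of_forall
    intro i
    rcases hcover i with ⟨l, hl⟩
    exact Finset.mem_biUnion.2 ⟨l, Finset.mem_univ l, hl⟩
  rw [← hbi, Finset.sum_biUnion]
  exact fun a _ b _ hab => hdisj a b hab

lemma cs_sqrt {n : ℕ} (s' : Finset (Fin n)) (f g : Fin n → ℝ) :
    ∑ i ∈ s', f i * g i
      ≤ Real.sqrt (∑ i ∈ s', (f i) ^ 2) * Real.sqrt (∑ i ∈ s', (g i) ^ 2) := by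
  have h := Finset.sum_mul_sq_le_sq_mul_sq s' f g
  have hA : (0:ℝ) ≤ ∑ i ∈ s', (f i) ^ 2 := Finset.sum_nonneg fun i _ => sq_nonneg _
  calc ∑ i ∈ s', f i * g i ≤ |∑ i ∈ s', f i * g i| := le_abs_self _
    _ = Real.sqrt ((∑ i ∈ s', f i * g i) ^ 2) := (Real.sqrt_sq_eq_abs _).symm
    _ ≤ Real.sqrt ((∑ i ∈ s', (f i) ^ 2) * ∑ i ∈ s', (g i) ^ 2) := Real.sqrt_le_sqrt h
    _ = _ := Real.sqrt_mul hA _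

lemma fconj_gsk {n m : ℕ} (s : Fin m → Finset (Fin n)) (d : Fin m → ℝ) (k : ℕ)
    (hdisj : ∀ j j', j ≠ j' → Disjoint (s j) (s j'))
    (hcover : ∀ i, ∃ j, i ∈ s j) (hd : ∀ j, 0 < d j) (y : Fin n → ℝ) :
    fconj (gsk s d k) y = ((Tfun s d k y : ℝ) : EReal) := by
  apply le_antisymm
  · apply iSup_le
    intro θ
    by_cases hfeas : nnzGroups s θ ≤ k
    · unfold gsk
      rw [if_pos hfeas, ← EReal.coe_sub, EReal.coe_le_coe_iff]
      set S : Finset (Fin m) := Finset.univ.filter (fun l => groupProj (s l) θ ≠ 0)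
        with hSdef
      have hSmem : S ∈ Sk m k := by
        simp only [Sk, Finset.mem_filter, Finset.mem_powerset]
        exact ⟨Finset.subset_univ _, hfeas⟩
      have key : ∀ l, (∑ i ∈ s l, y i * θ i) - (1:ℝ)/2 * (d l * ∑ i ∈ s l, (θ i) ^ 2)
          ≤ (if l ∈ S then (∑ i ∈ s l, (y i) ^ 2) / (2 * d l) else 0) := by
        intro l
        by_cases hl : l ∈ S
        · rw [if_pos hl]
          have h1 : ∀ i ∈ s l, y i * θ i - (1:ℝ)/2 * (d l * (θ i) ^ 2)
              ≤ (y i) ^ 2 / (2 * d l) := by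
            intro i _
            have hdl := hd l
            rw [le_div_iff₀ (by positivity)]
            nlinarith [sq_nonneg (y i - d l * θ i)]
          calc (∑ i ∈ s l, y i * θ i) - (1:ℝ)/2 * (d l * ∑ i ∈ s l, (θ i) ^ 2)
              = ∑ i ∈ s l, (y i * θ i - (1:ℝ)/2 * (d l * (θ i) ^ 2)) := by
                rw [Finset.sum_sub_distrib, Finset.mul_sum, Finset.mul_sum]
            _ ≤ ∑ i ∈ s l, (y i) ^ 2 / (2 * d l) := Finset.sum_le_sum h1
            _ = (∑ i ∈ s l, (y i) ^ 2) / (2 * d l) := by rw [Finset.sum_div]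
        · rw [if_neg hl]
          have hz : ∀ i ∈ s l, θ i = 0 := by
            have hzero : groupProj (s l) θ = 0 := by
              by_contra hne
              exact hl (by simp [hSdef, Finset.mem_filter, hne])
            exact groupProj_eq_zero.mp hzero
          have h1 : ∑ i ∈ s l, y i * θ i = 0 :=
            Finset.sum_eq_zero fun i hi => by rw [hz i hi, mul_zero]
          have h2 : ∑ i ∈ s l, (θ i) ^ 2 = 0 :=
            Finset.sum_eq_zero fun i hi => by rw [hz i hi]; ring
          rw [h1, h2]
          norm_num
      calc (∑ i, y i * θ i) - (1:ℝ)/2 * ∑ l, d l * ∑ i ∈ s l, (θ i) ^ 2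
          = ∑ l, ((∑ i ∈ s l, y i * θ i) - (1:ℝ)/2 * (d l * ∑ i ∈ s l, (θ i) ^ 2)) := by
            rw [Finset.sum_sub_distrib, ← sum_partition s hdisj hcover (fun i => y i * θ i),
              ← Finset.mul_sum]
        _ ≤ ∑ l, (if l ∈ S then (∑ i ∈ s l, (y i) ^ 2) / (2 * d l) else 0) :=
            Finset.sum_le_sum fun l _ => key l
        _ = ∑ l ∈ S, (∑ i ∈ s l, (y i) ^ 2) / (2 * d l) := by
            rw [Finset.sum_ite_mem, Finset.univ_inter]
        _ ≤ Tfun s d k y :=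
            Finset.le_sup' (fun S : Finset (Fin m) =>
              ∑ l ∈ S, (∑ i ∈ s l, (y i) ^ 2) / (2 * d l)) hSmem
    · unfold gsk
      rw [if_neg hfeas, EReal.sub_top]
      exact bot_le
  · obtain ⟨S₀, hS₀mem, hS₀⟩ := Finset.exists_mem_eq_sup' (Sk_nonempty m k)
      (fun S : Finset (Fin m) => ∑ l ∈ S, (∑ i ∈ s l, (y i) ^ 2) / (2 * d l))
    choose gOf hgOf using hcover
    have hgu : ∀ {i : Fin n} {l : Fin m}, i ∈ s l → gOf i = l := by
      intro i l hi
      by_contra hne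
      exact Finset.disjoint_left.mp (hdisj _ _ hne) (hgOf i) hi
    set θ₀ : Fin n → ℝ := fun i => if gOf i ∈ S₀ then y i / d (gOf i) else 0 with hθ₀def
    have hθ₀l : ∀ {l : Fin m} {i : Fin n}, i ∈ s l →
        θ₀ i = if l ∈ S₀ then y i / d l else 0 := by
      intro l i hi
      simp only [hθ₀def]
      rw [hgu hi]
    have hfeas : nnzGroups s θ₀ ≤ k := by
      have hsub : (Finset.univ.filter fun l => groupProj (s l) θ₀ ≠ 0) ⊆ S₀ := by
        intro l hl
        simp only [Finset.mem_filter] at hl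
        by_contra hlS
        apply hl.2
        apply groupProj_eq_zero.mpr
        intro i hi
        rw [hθ₀l hi, if_neg hlS]
      have hS₀k : S₀.card ≤ k := by
        simpa [Sk] using hS₀mem
      exact le_trans (Finset.card_le_card hsub) hS₀k
    have hsum1 : ∑ i, y i * θ₀ i = ∑ l ∈ S₀, (∑ i ∈ s l, (y i) ^ 2) / d l := by
      rw [sum_partition s hdisj (fun i => ⟨gOf i, hgOf i⟩) (fun i => y i * θ₀ i)]
      have hin : ∀ l, ∑ i ∈ s l, y i * θ₀ i
          = if l ∈ S₀ then (∑ i ∈ s l, (y i) ^ 2) / d l else 0 := by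
        intro l
        by_cases hl : l ∈ S₀
        · rw [if_pos hl, Finset.sum_div]
          refine Finset.sum_congr rfl fun i hi => ?_
          rw [hθ₀l hi, if_pos hl]
          ring
        · rw [if_neg hl]
          refine Finset.sum_eq_zero fun i hi => ?_
          rw [hθ₀l hi, if_neg hl, mul_zero]
      rw [Finset.sum_congr rfl fun l _ => hin l, Finset.sum_ite_mem, Finset.univ_inter]
    have hsum2 : ∑ l, d l * ∑ i ∈ s l, (θ₀ i) ^ 2
        = ∑ l ∈ S₀, (∑ i ∈ s l, (y i) ^ 2) / d l := by
      have hin : ∀ l, d l * ∑ i ∈ s l, (θ₀ i) ^ 2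
          = if l ∈ S₀ then (∑ i ∈ s l, (y i) ^ 2) / d l else 0 := by
        intro l
        have hdl := (hd l).ne'
        by_cases hl : l ∈ S₀
        · rw [if_pos hl]
          have : ∑ i ∈ s l, (θ₀ i) ^ 2 = (∑ i ∈ s l, (y i) ^ 2) / (d l) ^ 2 := by
            rw [Finset.sum_div]
            refine Finset.sum_congr rfl fun i hi => ?_
            rw [hθ₀l hi, if_pos hl, div_pow]
          rw [this]
          field_simp
        · rw [if_neg hl]
          have : ∑ i ∈ s l, (θ₀ i) ^ 2 = 0 :=
            Finset.sum_eq_zero fun i hi => by rw [hθ₀l hi, if_neg hl]; ring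
          rw [this, mul_zero]
      rw [Finset.sum_congr rfl fun l _ => hin l, Finset.sum_ite_mem, Finset.univ_inter]
    have hval : (∑ i, y i * θ₀ i) - (1:ℝ)/2 * ∑ l, d l * ∑ i ∈ s l, (θ₀ i) ^ 2
        = Tfun s d k y := by
      rw [hsum1, hsum2]
      show _ = Tfun s d k y
      unfold Tfun
      rw [hS₀, Finset.mul_sum, ← Finset.sum_sub_distrib]
      refine Finset.sum_congr rfl fun l _ => ?_
      have hdl := (hd l).ne'
      field_simp
      ring
    refine le_trans ?_ (le_iSup _ θ₀)
    unfold gsk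
    rw [if_pos hfeas, ← EReal.coe_sub, EReal.coe_le_coe_iff]
    exact le_of_eq hval.symm

lemma constructMono {n m : ℕ} (s : Fin m → Finset (Fin n)) (d : Fin m → ℝ) (k : ℕ)
    (hdisj : ∀ j j', j ≠ j' → Disjoint (s j) (s j')) (j : Fin m)
    (v θ : Fin n → ℝ) (hoff : ∀ i, i ∉ s j → θ i = v i)
    (hN : ∑ i ∈ s j, (θ i) ^ 2 ≤ ∑ i ∈ s j, (v i) ^ 2) (y : Fin n → ℝ) :
    ∃ y', (∑ i, θ i * y i) - Tfun s d k y ≤ (∑ i, v i * y' i) - Tfun s d k y' := by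
  by_cases hr : ∑ i ∈ s j, (v i) ^ 2 = 0
  · refine ⟨y, le_of_eq ?_⟩
    have hv0 : ∀ i ∈ s j, v i = 0 := fun i hi =>
      pow_eq_zero_iff two_ne_zero |>.mp
        ((Finset.sum_eq_zero_iff_of_nonneg fun i _ => sq_nonneg (v i)).mp hr i hi)
    have hθsum : ∑ i ∈ s j, (θ i) ^ 2 = 0 :=
      le_antisymm (hr ▸ hN) (Finset.sum_nonneg fun i _ => sq_nonneg _)
    have hθ0 : ∀ i ∈ s j, θ i = 0 := fun i hi =>
      pow_eq_zero_iff two_ne_zero |>.mp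
        ((Finset.sum_eq_zero_iff_of_nonneg fun i _ => sq_nonneg (θ i)).mp hθsum i hi)
    have : ∑ i, θ i * y i = ∑ i, v i * y i := by
      refine Finset.sum_congr rfl fun i _ => ?_
      by_cases hi : i ∈ s j
      · rw [hθ0 i hi, hv0 i hi]
      · rw [hoff i hi]
    rw [this]
  · have hr2 : 0 < ∑ i ∈ s j, (v i) ^ 2 :=
      lt_of_le_of_ne (Finset.sum_nonneg fun i _ => sq_nonneg _) (Ne.symm hr)
    set r := Real.sqrt (∑ i ∈ s j, (v i) ^ 2) with hrdef
    set ρ := Real.sqrt (∑ i ∈ s j, (y i) ^ 2) with hρdef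
    have hrpos : 0 < r := Real.sqrt_pos.mpr hr2
    have hr_sq : r ^ 2 = ∑ i ∈ s j, (v i) ^ 2 := Real.sq_sqrt hr2.le
    have hρ_sq : ρ ^ 2 = ∑ i ∈ s j, (y i) ^ 2 :=
      Real.sq_sqrt (Finset.sum_nonneg fun i _ => sq_nonneg _)
    have hρ0 : 0 ≤ ρ := Real.sqrt_nonneg _
    refine ⟨fun i => if i ∈ s j then ρ / r * v i else y i, ?_⟩
    have hTeq : Tfun s d k (fun i => if i ∈ s j then ρ / r * v i else y i)
        = Tfun s d k y := by
      apply Tfun_congr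
      intro l
      by_cases hl : l = j
      · subst hl
        calc ∑ i ∈ s l, (if i ∈ s l then ρ / r * v i else y i) ^ 2
            = ∑ i ∈ s l, (ρ / r) ^ 2 * (v i) ^ 2 :=
              Finset.sum_congr rfl fun i hi => by rw [if_pos hi]; ring
          _ = (ρ / r) ^ 2 * ∑ i ∈ s l, (v i) ^ 2 := (Finset.mul_sum _ _ _).symm
          _ = ∑ i ∈ s l, (y i) ^ 2 := by
              rw [← hr_sq, ← hρ_sq]
              field_simp
      · refine Finset.sum_congr rfl fun i hi => ?_
        rw [if_neg (Finset.disjoint_left.mp (hdisj l j hl) hi)]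
    rw [hTeq]
    have hdiff : (∑ i, v i * (if i ∈ s j then ρ / r * v i else y i)) - ∑ i, θ i * y i
        = ρ / r * (∑ i ∈ s j, (v i) ^ 2) - ∑ i ∈ s j, θ i * y i := by
      rw [← Finset.sum_sub_distrib]
      rw [← Finset.sum_subset (Finset.subset_univ (s j))
        (fun i _ hi => by rw [if_neg hi, hoff i hi, sub_self])]
      have : ∀ i ∈ s j, v i * (if i ∈ s j then ρ / r * v i else y i) - θ i * y i
          = ρ / r * (v i) ^ 2 - θ i * y i := fun i hi => by rw [if_pos hi]; ring
      rw [Finset.sum_congr rfl this, Finset.sum_sub_distrib, ← Finset.mul_sum]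
    have hP : ∑ i ∈ s j, θ i * y i ≤ r * ρ := by
      have h1 := cs_sqrt (s j) θ y
      have h2 : Real.sqrt (∑ i ∈ s j, (θ i) ^ 2) ≤ r := by
        rw [hrdef]
        exact Real.sqrt_le_sqrt hN
      calc ∑ i ∈ s j, θ i * y i ≤ Real.sqrt (∑ i ∈ s j, (θ i) ^ 2) * ρ := h1
        _ ≤ r * ρ := mul_le_mul_of_nonneg_right h2 hρ0
    have hval : ρ / r * (∑ i ∈ s j, (v i) ^ 2) = r * ρ := by
      rw [← hr_sq]
      field_simp
    have : 0 ≤ (∑ i, v i * (if i ∈ s j then ρ / r * v i else y i)) - ∑ i, θ i * y i := by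
      rw [hdiff, hval]
      linarith
    linarith

lemma scalar_key (dj γ r ρ P : ℝ) (hdj : 0 < dj) (hγ0 : 0 ≤ γ) (hγ1 : γ ≤ 1)
    (hrpos : 0 < r) (hρ0 : 0 ≤ ρ) (hP : P ≤ r * ρ) :
    dj * (1 - γ ^ 2) * r ^ 2 / 2 + γ * P
      + ((max (ρ / r) dj) ^ 2 * r ^ 2 - ρ ^ 2) / (2 * dj)
    ≤ (max (ρ / r) dj) * r ^ 2 := by
  have hγP : γ * P ≤ γ * (r * ρ) := mul_le_mul_of_nonneg_left hP hγ0
  rcases max_cases (ρ / r) dj with ⟨hμeq, hge⟩ | ⟨hμeq, hlt⟩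
  · rw [hμeq]
    have hdr : dj * r ≤ ρ := by
      rw [le_div_iff₀ hrpos] at hge
      linarith
    have hμr2 : ρ / r * r ^ 2 = ρ * r := by
      field_simp
    have hμ2r2 : (ρ / r) ^ 2 * r ^ 2 - ρ ^ 2 = 0 := by
      field_simp
      ring
    rw [hμ2r2, zero_div, hμr2]
    have h1γ : (0:ℝ) ≤ (1 - γ ^ 2) * r / 2 := by
      nlinarith [mul_nonneg (mul_nonneg (sub_nonneg.2 hγ1)
        (by linarith : (0:ℝ) ≤ 1 + γ)) hrpos.le]
    nlinarith [hγP, mul_le_mul_of_nonneg_right hdr h1γ,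
      mul_nonneg (sq_nonneg (1 - γ)) (mul_nonneg hρ0 hrpos.le)]
  · rw [hμeq]
    have h2d : (0:ℝ) < 2 * dj := by positivity
    have hqe : (dj ^ 2 * r ^ 2 - ρ ^ 2) / (2 * dj)
        = dj * r ^ 2 / 2 - ρ ^ 2 / (2 * dj) := by
      field_simp
    rw [hqe]
    have key2 : γ * (r * ρ) ≤ dj * γ ^ 2 * r ^ 2 / 2 + ρ ^ 2 / (2 * dj) := by
      rw [show dj * γ ^ 2 * r ^ 2 / 2 + ρ ^ 2 / (2 * dj)
          = (dj ^ 2 * γ ^ 2 * r ^ 2 + ρ ^ 2) / (2 * dj) from by field_simp]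
      rw [le_div_iff₀ h2d]
      nlinarith [sq_nonneg (ρ - dj * γ * r)]
    have hexp : dj * (1 - γ ^ 2) * r ^ 2 / 2
        = dj * r ^ 2 / 2 - dj * γ ^ 2 * r ^ 2 / 2 := by ring
    linarith [hγP, key2, hexp]

lemma constructQuant {n m : ℕ} (s : Fin m → Finset (Fin n)) (d : Fin m → ℝ) (k : ℕ)
    (hdisj : ∀ j j', j ≠ j' → Disjoint (s j) (s j')) (j : Fin m) (hd : 0 < d j)
    (v : Fin n → ℝ) (γ : ℝ) (hγ0 : 0 ≤ γ) (hγ1 : γ ≤ 1) (y : Fin n → ℝ) :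
    ∃ y', (∑ i, (if i ∈ s j then γ * v i else v i) * y i) - Tfun s d k y
        + d j * (1 - γ ^ 2) * (∑ i ∈ s j, (v i) ^ 2) / 2
      ≤ (∑ i, v i * y' i) - Tfun s d k y' := by
  by_cases hr : ∑ i ∈ s j, (v i) ^ 2 = 0
  · refine ⟨y, le_of_eq ?_⟩
    have hv0 : ∀ i ∈ s j, v i = 0 := fun i hi =>
      pow_eq_zero_iff two_ne_zero |>.mp
        ((Finset.sum_eq_zero_iff_of_nonneg fun i _ => sq_nonneg (v i)).mp hr i hi)
    have h1 : ∑ i, (if i ∈ s j then γ * v i else v i) * y i = ∑ i, v i * y i := by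
      refine Finset.sum_congr rfl fun i _ => ?_
      by_cases hi : i ∈ s j
      · rw [if_pos hi, hv0 i hi]; ring
      · rw [if_neg hi]
    rw [h1, hr]
    ring
  · have hr2 : 0 < ∑ i ∈ s j, (v i) ^ 2 :=
      lt_of_le_of_ne (Finset.sum_nonneg fun i _ => sq_nonneg _) (Ne.symm hr)
    set r := Real.sqrt (∑ i ∈ s j, (v i) ^ 2) with hrdef
    set ρ := Real.sqrt (∑ i ∈ s j, (y i) ^ 2) with hρdef
    have hrpos : 0 < r := Real.sqrt_pos.mpr hr2
    have hr_sq : r ^ 2 = ∑ i ∈ s j, (v i) ^ 2 := Real.sq_sqrt hr2.le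
    have hρ_sq : ρ ^ 2 = ∑ i ∈ s j, (y i) ^ 2 :=
      Real.sq_sqrt (Finset.sum_nonneg fun i _ => sq_nonneg _)
    have hρ0 : 0 ≤ ρ := Real.sqrt_nonneg _
    set μ := max (ρ / r) (d j) with hμdef
    have hμd : d j ≤ μ := le_max_right _ _
    have hμρ : ρ / r ≤ μ := le_max_left _ _
    have hμ0 : 0 < μ := lt_of_lt_of_le hd hμd
    set y' : Fin n → ℝ := fun i => if i ∈ s j then μ * v i else y i with hy'def
    have hNy' : ∑ i ∈ s j, (y' i) ^ 2 = μ ^ 2 * ∑ i ∈ s j, (v i) ^ 2 := by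
      rw [Finset.mul_sum]
      refine Finset.sum_congr rfl fun i hi => ?_
      rw [hy'def]
      simp only [if_pos hi]
      ring
    have hμr : ρ ≤ μ * r := by
      have h := (div_le_iff₀ hrpos).mp hμρ
      linarith
    have hNle : ∑ i ∈ s j, (y i) ^ 2 ≤ ∑ i ∈ s j, (y' i) ^ 2 := by
      rw [hNy', ← hr_sq, ← hρ_sq]
      nlinarith [hμr, hρ0, hμ0.le, hrpos.le]
    have hlip := Tfun_lip s d k hdisj j hd
      (y := y) (y' := y') (fun i hi => by rw [hy'def]; simp only [if_neg hi]) hNle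
    refine ⟨y', ?_⟩
    have hdiff : (∑ i, v i * y' i) - ∑ i, (if i ∈ s j then γ * v i else v i) * y i
        = μ * (∑ i ∈ s j, (v i) ^ 2) - γ * ∑ i ∈ s j, v i * y i := by
      rw [← Finset.sum_sub_distrib]
      rw [← Finset.sum_subset (Finset.subset_univ (s j))
        (fun i _ hi => by rw [hy'def]; simp only [if_neg hi]; ring)]
      have : ∀ i ∈ s j, v i * y' i - (if i ∈ s j then γ * v i else v i) * y i
          = μ * (v i) ^ 2 - γ * (v i * y i) := fun i hi => by
        rw [hy'def]; simp only [if_pos hi]; ring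
      rw [Finset.sum_congr rfl this, Finset.sum_sub_distrib, ← Finset.mul_sum,
        ← Finset.mul_sum]
    have hP : ∑ i ∈ s j, v i * y i ≤ r * ρ := by
      have h1 := cs_sqrt (s j) v y
      rw [← hrdef, ← hρdef] at h1
      exact h1
    clear_value r ρ μ y'
    -- main scalar inequality
    have hkey : d j * (1 - γ ^ 2) * (∑ i ∈ s j, (v i) ^ 2) / 2
        + γ * (∑ i ∈ s j, v i * y i)
        + ((∑ i ∈ s j, (y' i) ^ 2) - ∑ i ∈ s j, (y i) ^ 2) / (2 * d j)
        ≤ μ * (∑ i ∈ s j, (v i) ^ 2) := by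
      rw [hNy', ← hr_sq, ← hρ_sq, hμdef]
      exact scalar_key (d j) γ r ρ _ hd hγ0 hγ1 hrpos hρ0 hP
    have hT := hlip
    linarith [hdiff, hkey, hT]

lemma final_contra (L c₀ cs : ℝ) (hL : 0 < L) (hcs_eq : cs * (L + 1) = 1)
    (hgt : cs < c₀)
    (hfin : L * (c₀ ^ 2 - cs ^ 2) / 2 ≤ ((cs - 1) ^ 2 - (c₀ - 1) ^ 2) / 2) : False := by
  have hB : 0 < (c₀ - cs) ^ 2 * (L + 1) :=
    mul_pos (pow_pos (sub_pos.2 hgt) 2) (by linarith)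
  nlinarith [hfin, hB, hcs_eq, sub_pos.2 hgt]


set_option maxHeartbeats 1000000 in
/-- the proximal point `v = prox_{λGS_k}(t)` (characterized as
the global minimizer of `θ ↦ λ·GS_k(θ) + ½‖θ-t‖²`) satisfies, group by group:
(i) `‖v_{s_j}‖₂ ≤ ‖t_{s_j}‖₂`; (ii) `v_{s_j} = 0` whenever `t_{s_j} = 0`;
(iii) `v_{s_j}` is a nonnegative scalar multiple of `t_{s_j}` with scalar in
`[0, 1/(λd_j + 1)] ⊆ [0,1]`. -/
theorem prox_properties {n m : ℕ} (k : ℕ) (hk1 : 1 ≤ k) (hkm : k ≤ m)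
    (s : Fin m → Finset (Fin n))
    (hdisj : ∀ j j', j ≠ j' → Disjoint (s j) (s j'))
    (hcover : ∀ i, ∃ j, i ∈ s j)
    (d : Fin m → ℝ) (hd : ∀ j, 0 < d j)
    (lam : ℝ) (hlam : 0 < lam) (t : Fin n → ℝ)
    (v : Fin n → ℝ)
    (hv : ∀ θ : Fin n → ℝ,
      ((lam : ℝ) : EReal) * fconj (fconj (gsk s d k)) v
          + ((((1 : ℝ) / 2) * ∑ i, (v i - t i) ^ 2 : ℝ) : EReal)
        ≤ ((lam : ℝ) : EReal) * fconj (fconj (gsk s d k)) θ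
          + ((((1 : ℝ) / 2) * ∑ i, (θ i - t i) ^ 2 : ℝ) : EReal)) :
    ∀ j, (∑ i ∈ s j, (v i) ^ 2 ≤ ∑ i ∈ s j, (t i) ^ 2)
      ∧ (groupProj (s j) t = 0 → groupProj (s j) v = 0)
      ∧ ∃ c : ℝ, 0 ≤ c ∧ c ≤ 1 / (lam * d j + 1) ∧ c ≤ 1
          ∧ groupProj (s j) v = c • groupProj (s j) t := by
  have hT : ∀ y, fconj (gsk s d k) y = ((Tfun s d k y : ℝ) : EReal) :=
    fconj_gsk s d k hdisj hcover hd
  have hGdef : ∀ w, fconj (fconj (gsk s d k)) w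
      = ⨆ y : Fin n → ℝ, ((∑ i, w i * y i - Tfun s d k y : ℝ) : EReal) := by
    intro w
    have h0 : fconj (fconj (gsk s d k)) w
        = ⨆ y : Fin n → ℝ, ((∑ i, w i * y i : ℝ) : EReal) - fconj (gsk s d k) y := rfl
    rw [h0]
    exact iSup_congr fun y => by rw [hT y, ← EReal.coe_sub]
  have hG0 : ∀ w, (0 : EReal) ≤ fconj (fconj (gsk s d k)) w := by
    intro w
    rw [hGdef w]
    have h00 : ((∑ i, w i * (0 : Fin n → ℝ) i - Tfun s d k 0 : ℝ) : EReal) = (0 : EReal) := by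
      simp [Tfun_zero]
    rw [← h00]
    exact le_iSup (fun y => ((∑ i, w i * y i - Tfun s d k y : ℝ) : EReal)) 0
  have hGzero : fconj (fconj (gsk s d k)) 0 = 0 := by
    refine le_antisymm ?_ (hG0 0)
    rw [hGdef 0]
    apply iSup_le
    intro y
    have h1 : (∑ i, (0 : Fin n → ℝ) i * y i) - Tfun s d k y ≤ 0 := by
      simp [Tfun_nonneg s d k y]
    exact_mod_cast h1
  have hvtop : fconj (fconj (gsk s d k)) v ≠ ⊤ := by
    intro htop
    have h0 := hv 0
    rw [htop, hGzero, mul_zero, zero_add] at h0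
    rw [EReal.coe_mul_top_of_pos hlam, EReal.top_add_coe] at h0
    exact EReal.coe_ne_top _ (top_le_iff.mp h0)
  have hbot0 : (⊥ : EReal) < 0 := by simp
  have hvbot : fconj (fconj (gsk s d k)) v ≠ ⊥ :=
    ne_of_gt (lt_of_lt_of_le hbot0 (hG0 v))
  obtain ⟨g, hg⟩ : ∃ g : ℝ, fconj (fconj (gsk s d k)) v = (g : EReal) :=
    ⟨_, (EReal.coe_toReal hvtop hvbot).symm⟩
  have W : ∀ (θ : Fin n → ℝ) (c : ℝ),
      (∀ y : Fin n → ℝ, ∃ y', (∑ i, θ i * y i) - Tfun s d k y + c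
          ≤ (∑ i, v i * y' i) - Tfun s d k y') →
      lam * c + (1 : ℝ) / 2 * ∑ i, (v i - t i) ^ 2
        ≤ (1 : ℝ) / 2 * ∑ i, (θ i - t i) ^ 2 := by
    intro θ c hcon
    have hub : ∀ y, (∑ i, θ i * y i) - Tfun s d k y ≤ g - c := by
      intro y
      obtain ⟨y', h1⟩ := hcon y
      have h2 : ((∑ i, v i * y' i - Tfun s d k y' : ℝ) : EReal)
          ≤ fconj (fconj (gsk s d k)) v := by
        rw [hGdef v]
        exact le_iSup (fun y' => ((∑ i, v i * y' i - Tfun s d k y' : ℝ) : EReal)) y'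
      rw [hg] at h2
      have h2' := EReal.coe_le_coe_iff.mp h2
      linarith
    have hGθ : fconj (fconj (gsk s d k)) θ ≤ ((g - c : ℝ) : EReal) := by
      rw [hGdef θ]
      exact iSup_le fun y => EReal.coe_le_coe_iff.mpr (hub y)
    have hθtop : fconj (fconj (gsk s d k)) θ ≠ ⊤ := by
      intro h
      rw [h] at hGθ
      exact EReal.coe_ne_top _ (top_le_iff.mp hGθ)
    have hθbot : fconj (fconj (gsk s d k)) θ ≠ ⊥ :=
      ne_of_gt (lt_of_lt_of_le hbot0 (hG0 θ))
    obtain ⟨x, hx⟩ : ∃ x : ℝ, fconj (fconj (gsk s d k)) θ = (x : EReal) :=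
      ⟨_, (EReal.coe_toReal hθtop hθbot).symm⟩
    have hxle : x ≤ g - c := by
      rw [hx] at hGθ
      exact EReal.coe_le_coe_iff.mp hGθ
    have hmain := hv θ
    rw [hg, hx, ← EReal.coe_mul, ← EReal.coe_mul, ← EReal.coe_add, ← EReal.coe_add,
      EReal.coe_le_coe_iff] at hmain
    nlinarith [mul_le_mul_of_nonneg_left hxle hlam.le]
  intro j
  have hsplit : ∀ θ : Fin n → ℝ, (∀ i, i ∉ s j → θ i = v i) →
      (∑ i, (θ i - t i) ^ 2) - ∑ i, (v i - t i) ^ 2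
        = (∑ i ∈ s j, (θ i - t i) ^ 2) - ∑ i ∈ s j, (v i - t i) ^ 2 := by
    intro θ hoff
    rw [← Finset.sum_sub_distrib, ← Finset.sum_sub_distrib]
    exact (Finset.sum_subset (Finset.subset_univ _)
      (fun i _ hi => by rw [hoff i hi, sub_self])).symm
  set r2 := ∑ i ∈ s j, (t i) ^ 2 with hr2def
  set p := ∑ i ∈ s j, v i * t i with hpdef
  set w2 := ∑ i ∈ s j, (v i) ^ 2 with hw2def
  have hr2nn : 0 ≤ r2 := Finset.sum_nonneg fun i _ => sq_nonneg _
  have hw2nn : 0 ≤ w2 := Finset.sum_nonneg fun i _ => sq_nonneg _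
  set c₀ : ℝ := if r2 = 0 then 0 else max 0 (p / r2) with hc₀def
  have hc₀nn : 0 ≤ c₀ := by
    rw [hc₀def]
    split
    · exact le_refl 0
    · exact le_max_left 0 _
  set θ : Fin n → ℝ := fun i => if i ∈ s j then c₀ * t i else v i with hθdef
  have hoff : ∀ i, i ∉ s j → θ i = v i := fun i hi => by
    rw [hθdef]; simp only [if_neg hi]
  have hNθ : ∑ i ∈ s j, (θ i) ^ 2 = c₀ ^ 2 * r2 := by
    rw [hr2def, Finset.mul_sum]
    exact Finset.sum_congr rfl fun i hi => by
      rw [hθdef]; simp only [if_pos hi]; ring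
  have hCS : p ^ 2 ≤ w2 * r2 := by
    rw [hpdef, hw2def, hr2def]
    exact Finset.sum_mul_sq_le_sq_mul_sq (s j) v t
  have hNle : ∑ i ∈ s j, (θ i) ^ 2 ≤ ∑ i ∈ s j, (v i) ^ 2 := by
    rw [hNθ, ← hw2def]
    by_cases hr0 : r2 = 0
    · rw [hc₀def, if_pos hr0]
      simpa [hr0] using hw2nn
    · have hr2pos : 0 < r2 := lt_of_le_of_ne hr2nn (Ne.symm hr0)
      rw [hc₀def, if_neg hr0]
      rcases le_or_gt p 0 with hp | hp
      · have hple : p / r2 ≤ 0 := div_nonpos_of_nonpos_of_nonneg hp hr2nn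
        rw [max_eq_left hple]
        simpa using hw2nn
      · rw [max_eq_right (le_of_lt (div_pos hp hr2pos))]
        have he : (p / r2) ^ 2 * r2 = p ^ 2 / r2 := by
          field_simp
        rw [he, div_le_iff₀ hr2pos]
        exact hCS
  have hcm : ∀ y, ∃ y', (∑ i, θ i * y i) - Tfun s d k y + 0
      ≤ (∑ i, v i * y' i) - Tfun s d k y' := by
    intro y
    obtain ⟨y', hy'⟩ := constructMono s d k hdisj j v θ hoff hNle y
    exact ⟨y', by rw [add_zero]; exact hy'⟩
  have hW0 := W θ 0 hcm
  rw [mul_zero, zero_add] at hW0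
  have hq : ∑ i ∈ s j, (v i - t i) ^ 2 ≤ ∑ i ∈ s j, (θ i - t i) ^ 2 := by
    have hs := hsplit θ hoff
    linarith
  have hθt : ∑ i ∈ s j, (θ i - t i) ^ 2 = c₀ ^ 2 * r2 - 2 * c₀ * r2 + r2 := by
    have h1 : ∀ i ∈ s j, (θ i - t i) ^ 2
        = c₀ ^ 2 * (t i) ^ 2 - 2 * c₀ * (t i) ^ 2 + (t i) ^ 2 := fun i hi => by
      rw [hθdef]; simp only [if_pos hi]; ring
    rw [Finset.sum_congr rfl h1, Finset.sum_add_distrib, Finset.sum_sub_distrib,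
      ← Finset.mul_sum, ← Finset.mul_sum, ← hr2def]
  have hvt : ∑ i ∈ s j, (v i - t i) ^ 2 = w2 - 2 * p + r2 := by
    have h1 : ∀ i ∈ s j, (v i - t i) ^ 2
        = (v i) ^ 2 - 2 * (v i * t i) + (t i) ^ 2 := fun i _ => by ring
    rw [Finset.sum_congr rfl h1, Finset.sum_add_distrib, Finset.sum_sub_distrib,
      ← Finset.mul_sum, ← hr2def, ← hpdef, ← hw2def]
  have hvc : ∑ i ∈ s j, (v i - c₀ * t i) ^ 2 = w2 - 2 * c₀ * p + c₀ ^ 2 * r2 := by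
    have h1 : ∀ i ∈ s j, (v i - c₀ * t i) ^ 2
        = (v i) ^ 2 - 2 * c₀ * (v i * t i) + c₀ ^ 2 * (t i) ^ 2 := fun i _ => by ring
    rw [Finset.sum_congr rfl h1, Finset.sum_add_distrib, Finset.sum_sub_distrib,
      ← Finset.mul_sum, ← Finset.mul_sum, ← hr2def, ← hpdef, ← hw2def]
  rw [hθt, hvt] at hq
  have hsq0 : ∑ i ∈ s j, (v i - c₀ * t i) ^ 2 ≤ 0 := by
    rw [hvc]
    by_cases hr0 : r2 = 0
    · have hc00 : c₀ = 0 := by rw [hc₀def, if_pos hr0]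
      have ht0 : ∀ i ∈ s j, t i = 0 := fun i hi =>
        pow_eq_zero_iff two_ne_zero |>.mp
          ((Finset.sum_eq_zero_iff_of_nonneg fun i _ => sq_nonneg (t i)).mp hr0 i hi)
      have hp0 : p = 0 := Finset.sum_eq_zero fun i hi => by rw [ht0 i hi, mul_zero]
      rw [hc00, hp0, hr0] at hq
      rw [hc00, hp0, hr0]
      nlinarith [hq]
    · have hr2pos : 0 < r2 := lt_of_le_of_ne hr2nn (Ne.symm hr0)
      rcases le_or_gt p 0 with hp | hp
      · have hple : p / r2 ≤ 0 := div_nonpos_of_nonpos_of_nonneg hp hr2nn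
        have hc00 : c₀ = 0 := by rw [hc₀def, if_neg hr0, max_eq_left hple]
        rw [hc00] at hq ⊢
        nlinarith [hq, hp]
      · have hc0v : c₀ = p / r2 := by
          rw [hc₀def, if_neg hr0, max_eq_right (le_of_lt (div_pos hp hr2pos))]
        have hcr : c₀ * r2 = p := by
          rw [hc0v]
          field_simp
        have hc2 : c₀ ^ 2 * r2 = c₀ * p := by
          rw [← hcr]
          ring
        linarith [hq, hc2, hcr]
  have hveq : ∀ i ∈ s j, v i = c₀ * t i := by
    have h0 : ∑ i ∈ s j, (v i - c₀ * t i) ^ 2 = 0 :=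
      le_antisymm hsq0 (Finset.sum_nonneg fun i _ => sq_nonneg _)
    intro i hi
    have h1 := (Finset.sum_eq_zero_iff_of_nonneg fun i _ => sq_nonneg _).mp h0 i hi
    have h2 := pow_eq_zero_iff two_ne_zero |>.mp h1
    linarith [h2]
  have hldpos : 0 < lam * d j := mul_pos hlam (hd j)
  have hld : 0 < lam * d j + 1 := by linarith
  set cs := 1 / (lam * d j + 1) with hcsdef
  have hcs0 : 0 < cs := by rw [hcsdef]; positivity
  have hcs1 : cs ≤ 1 := by
    rw [hcsdef, div_le_one hld]
    linarith
  have hcs_eq : cs * (lam * d j + 1) = 1 := by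
    rw [hcsdef]
    field_simp
  have hc₀cs : c₀ ≤ cs := by
    by_contra hgt
    push_neg at hgt
    have hc₀pos : 0 < c₀ := lt_trans hcs0 hgt
    have hr2pos : 0 < r2 := by
      rcases eq_or_lt_of_le hr2nn with h | h
      · exfalso
        rw [hc₀def, if_pos h.symm] at hc₀pos
        exact lt_irrefl 0 hc₀pos
      · exact h
    set γ := cs / c₀ with hγdef
    have hγ0 : 0 ≤ γ := by positivity
    have hγ1 : γ ≤ 1 := by
      rw [hγdef, div_le_one hc₀pos]
      exact hgt.le
    have hcq : ∀ y, ∃ y', (∑ i, (if i ∈ s j then γ * v i else v i) * y i)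
        - Tfun s d k y + d j * (1 - γ ^ 2) * (∑ i ∈ s j, (v i) ^ 2) / 2
        ≤ (∑ i, v i * y' i) - Tfun s d k y' :=
      fun y => constructQuant s d k hdisj j (hd j) v γ hγ0 hγ1 y
    have hWq := W (fun i => if i ∈ s j then γ * v i else v i)
      (d j * (1 - γ ^ 2) * (∑ i ∈ s j, (v i) ^ 2) / 2) hcq
    have hoff2 : ∀ i, i ∉ s j → (if i ∈ s j then γ * v i else v i) = v i :=
      fun i hi => if_neg hi
    have hsp := hsplit (fun i => if i ∈ s j then γ * v i else v i) hoff2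
    have hw2c : w2 = c₀ ^ 2 * r2 := by
      rw [hw2def, hr2def, Finset.mul_sum]
      exact Finset.sum_congr rfl fun i hi => by rw [hveq i hi]; ring
    have hγc : γ * c₀ = cs := by
      rw [hγdef]
      field_simp
    have hγv : ∑ i ∈ s j, ((if i ∈ s j then γ * v i else v i) - t i) ^ 2
        = (cs - 1) ^ 2 * r2 := by
      rw [hr2def, Finset.mul_sum]
      refine Finset.sum_congr rfl fun i hi => ?_
      rw [if_pos hi, hveq i hi, show γ * (c₀ * t i) = (γ * c₀) * t i from by ring, hγc]
      ring
    have hvt2 : ∑ i ∈ s j, (v i - t i) ^ 2 = (c₀ - 1) ^ 2 * r2 := by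
      rw [hr2def, Finset.mul_sum]
      exact Finset.sum_congr rfl fun i hi => by rw [hveq i hi]; ring
    have hγ2 : γ ^ 2 * c₀ ^ 2 = cs ^ 2 := by rw [← hγc]; ring
    beta_reduce at hWq hsp
    have hineq : lam * (d j * (1 - γ ^ 2) * w2 / 2)
        ≤ (1 : ℝ) / 2 * ((cs - 1) ^ 2 * r2) - (1 : ℝ) / 2 * ((c₀ - 1) ^ 2 * r2) := by
      rw [← hγv, ← hvt2, hw2def]
      linarith [hWq, hsp]
    have hformL : lam * (d j * (1 - γ ^ 2) * w2 / 2)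
        = lam * d j * (c₀ ^ 2 - cs ^ 2) / 2 * r2 := by
      rw [hw2c, ← hγ2]
      ring
    have hformR : (1 : ℝ) / 2 * ((cs - 1) ^ 2 * r2) - (1 : ℝ) / 2 * ((c₀ - 1) ^ 2 * r2)
        = ((cs - 1) ^ 2 - (c₀ - 1) ^ 2) / 2 * r2 := by ring
    rw [hformL, hformR] at hineq
    have hfin : lam * d j * (c₀ ^ 2 - cs ^ 2) / 2 ≤ ((cs - 1) ^ 2 - (c₀ - 1) ^ 2) / 2 :=
      le_of_mul_le_mul_right hineq hr2pos
    exact final_contra (lam * d j) c₀ cs hldpos hcs_eq hgt hfin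
  have hc₀1 : c₀ ≤ 1 := le_trans hc₀cs hcs1
  refine ⟨?_, ?_, ⟨c₀, hc₀nn, hc₀cs, hc₀1, ?_⟩⟩
  · refine Finset.sum_le_sum fun i hi => ?_
    rw [hveq i hi]
    have h1 : (0:ℝ) ≤ 1 - c₀ ^ 2 := by nlinarith [hc₀nn, hc₀1]
    nlinarith [mul_nonneg h1 (sq_nonneg (t i))]
  · intro h
    apply groupProj_eq_zero.mpr
    intro i hi
    rw [hveq i hi, groupProj_eq_zero.mp h i hi, mul_zero]
  · funext i
    by_cases hi : i ∈ s j
    · simp [groupProj, hi, hveq i hi]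
    · simp [groupProj, hi]
end
end
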